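/- Vieta–Lucas wavelet coefficient bound: let k ≥ 1 and 1 ≤ s ≤ 2^{k−1} be natural numbers, set ŝ = 2(2s − 1), and let Y : ℝ → ℝ be twice continuously differentiable on [0, 2] with |Y''(ζ)| ≤ H for all ζ ∈ [0, 2], for some constant H ≥ 0. Define for m ∈ ℕ the coefficient Λ_{s,m} = ∫_{(ŝ−2)/2^k}^{(ŝ+2)/2^k} Y(ζ) · 2^{k/2} · (1/√(2π)) · VL_m(2^k ζ − ŝ) · (1/√(4 − (2^k ζ − ŝ)²)) dζ. Then for every m ≥ 2, |Λ_{s,m}| ≤ H · √π · 2^{(−5k+5)/2} / (m² − 1). -/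

import Mathlib

open Real MeasureTheory

/-- The Vieta–Lucas polynomials, defined recursively. -/
noncomputable def VL : ℕ → ℝ → ℝ
  | 0, _ => 2
  | 1, ζ => ζ
  | (m + 2), ζ => ζ * VL (m + 1) ζ - VL m ζ

lemma VL_two_cos : ∀ (m : ℕ) (θ : ℝ), VL m (2 * Real.cos θ) = 2 * Real.cos (m * θ) := by
  intro m
  induction m using Nat.strong_induction_on with
  | _ m ih =>
    match m with
    | 0 => intro θ; simp [VL]
    | 1 => intro θ; simp [VL]
    | (n + 2) =>
      intro θ
      show 2 * Real.cos θ * VL (n + 1) (2 * Real.cos θ) - VL n (2 * Real.cos θ) = _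
      rw [ih (n+1) (by omega), ih n (by omega)]
      have h1 : ((n:ℝ) + 2) * θ = ((n:ℝ)+1) * θ + θ := by ring
      have h2 : (n:ℝ) * θ = ((n:ℝ)+1) * θ - θ := by ring
      push_cast
      rw [h1, h2, Real.cos_add, Real.cos_sub]
      ring

open Set intervalIntegral in
lemma ibp_cos (u u' : ℝ → ℝ) (n : ℕ) (hn : 1 ≤ n)
    (hu : ContinuousOn u (Icc 0 π)) (hu' : ContinuousOn u' (Icc 0 π))
    (hd : ∀ θ ∈ Ioo 0 π, HasDerivAt u (u' θ) θ) :
    ∫ θ in (0:ℝ)..π, u θ * Real.cos (n * θ)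
      = -(1/(n:ℝ)) * ∫ θ in (0:ℝ)..π, u' θ * Real.sin (n * θ) := by
  have hπ : (0:ℝ) ≤ π := Real.pi_nonneg
  have hn' : (n:ℝ) ≠ 0 := by positivity
  set w : ℝ → ℝ := fun θ => u θ * Real.sin (n * θ) / n with hw
  have hderiv : ∀ θ ∈ Ioo (0:ℝ) π,
      HasDerivWithinAt w (u' θ * Real.sin (n * θ) / n + u θ * Real.cos (n * θ)) (Ioi θ) θ := by
    intro θ hθ
    have hs : HasDerivAt (fun θ : ℝ => Real.sin (n * θ)) (Real.cos (n * θ) * n) θ := by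
      have h := (Real.hasDerivAt_sin ((n:ℝ) * θ)).comp θ ((hasDerivAt_id θ).const_mul (n:ℝ))
      simp only [mul_one] at h
      exact h
    have := (((hd θ hθ).mul hs).div_const (n:ℝ))
    refine this.hasDerivWithinAt.congr_deriv ?_
    field_simp
  have hcont : ContinuousOn w (Icc 0 π) :=
    ((hu.mul (by fun_prop)).div_const _)
  have hint : IntervalIntegrable (fun θ => u' θ * Real.sin (n * θ) / n + u θ * Real.cos (n * θ))
      MeasureTheory.volume 0 π := by
    apply ContinuousOn.intervalIntegrable
    rw [uIcc_of_le hπ]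
    exact ((hu'.mul (by fun_prop)).div_const _).add (hu.mul (by fun_prop))
  have hftc := integral_eq_sub_of_hasDeriv_right_of_le hπ hcont hderiv hint
  have hw0 : w 0 = 0 := by simp [hw]
  have hwπ : w π = 0 := by simp [hw, Real.sin_nat_mul_pi]
  rw [hwπ, hw0, sub_zero] at hftc
  have hi1 : IntervalIntegrable (fun θ => u' θ * Real.sin (n * θ) / n) MeasureTheory.volume 0 π := by
    apply ContinuousOn.intervalIntegrable; rw [uIcc_of_le hπ]
    exact (hu'.mul (by fun_prop)).div_const _
  have hi2 : IntervalIntegrable (fun θ => u θ * Real.cos (n * θ)) MeasureTheory.volume 0 π := by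
    apply ContinuousOn.intervalIntegrable; rw [uIcc_of_le hπ]
    exact hu.mul (by fun_prop)
  rw [intervalIntegral.integral_add hi1 hi2] at hftc
  have : ∫ θ in (0:ℝ)..π, u' θ * Real.sin (n * θ) / n
      = (1/(n:ℝ)) * ∫ θ in (0:ℝ)..π, u' θ * Real.sin (n * θ) := by
    rw [← intervalIntegral.integral_const_mul]
    congr 1; ext θ; ring
  rw [this] at hftc
  linarith

lemma two_rpow_div_helper (a c d e f : ℝ) (h : a + 4 - (c + d + e) = 1 + f) :
    (2:ℝ)^a * 16 / ((2:ℝ)^c * (2:ℝ)^d * (2:ℝ)^e) = 2 * (2:ℝ)^f := by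
  have h2 : (0:ℝ) < 2 := by norm_num
  have h16 : (16:ℝ) = (2:ℝ)^((4:ℝ)) := by
    rw [show ((4:ℝ)) = ((4:ℕ):ℝ) by norm_num, Real.rpow_natCast]; norm_num
  have hrhs : 2 * (2:ℝ)^f = (2:ℝ)^(1 + f) := by
    rw [Real.rpow_add h2, Real.rpow_one]
  rw [h16, hrhs, ← Real.rpow_add h2, ← Real.rpow_add h2, ← Real.rpow_add h2,
    ← Real.rpow_sub h2]
  congr 1

set_option maxHeartbeats 2000000 in
theorem vieta_lucas_wavelet_coefficient_bound
    (k s : ℕ) (hk : 1 ≤ k) (hs1 : 1 ≤ s) (hs2 : s ≤ 2 ^ (k - 1))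
    (Y : ℝ → ℝ) (H : ℝ) (hH : 0 ≤ H)
    (hY : ContDiffOn ℝ 2 Y (Set.Icc (0 : ℝ) 2))
    (hY'' : ∀ ζ ∈ Set.Icc (0 : ℝ) 2,
      |iteratedDerivWithin 2 Y (Set.Icc (0 : ℝ) 2) ζ| ≤ H)
    (sh : ℝ) (hsh : sh = 2 * (2 * (s : ℝ) - 1))
    (Λ : ℕ → ℝ)
    (hΛ : ∀ m : ℕ, Λ m =
      ∫ ζ in ((sh - 2) / 2 ^ k)..((sh + 2) / 2 ^ k),
        Y ζ * 2 ^ ((k : ℝ) / 2) * (1 / Real.sqrt (2 * π)) *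
          VL m (2 ^ k * ζ - sh) * (1 / Real.sqrt (4 - (2 ^ k * ζ - sh) ^ 2))) :
    ∀ m : ℕ, 2 ≤ m →
      |Λ m| ≤ H * Real.sqrt π * 2 ^ (((-5 : ℝ) * (k : ℝ) + 5) / 2) / ((m : ℝ) ^ 2 - 1) := by
  intro m hm
  have hπ0 : (0:ℝ) ≤ π := Real.pi_nonneg
  have hM : (2:ℝ) ≤ (m:ℝ) := by exact_mod_cast hm
  set K : ℝ := (2:ℝ) ^ k with hKdef
  have hK : (0:ℝ) < K := by positivity
  set a : ℝ := (sh - 2) / K with hadef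
  set b : ℝ := (sh + 2) / K with hbdef
  set g : ℝ → ℝ := fun θ => (2 * Real.cos θ + sh) / K with hgdef
  set g' : ℝ → ℝ := fun θ => 2 * -Real.sin θ / K with hg'def
  -- basic interval facts
  have hsh2 : (2:ℝ) ≤ sh := by
    rw [hsh]
    have : (1:ℝ) ≤ (s:ℝ) := by exact_mod_cast hs1
    nlinarith
  have hshK : sh + 2 ≤ 2 * K := by
    rw [hsh, hKdef]
    have h1 : (s:ℝ) ≤ (2:ℝ) ^ (k - 1) := by exact_mod_cast hs2
    have h2 : (2:ℝ) ^ k = 2 * (2:ℝ) ^ (k - 1) := by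
      rw [← pow_succ']
      congr 1
      omega
    rw [h2]; nlinarith
  have ha0 : 0 ≤ a := div_nonneg (by linarith) hK.le
  have hb2 : b ≤ 2 := by
    rw [hbdef, div_le_iff₀ hK]; linarith
  have hab : a ≤ b := by
    rw [hadef, hbdef, div_le_div_iff₀ hK hK]; nlinarith
  have hsub : Set.Icc a b ⊆ Set.Icc (0:ℝ) 2 :=
    Set.Icc_subset_Icc ha0 hb2
  -- derivative of g
  have hg : ∀ θ : ℝ, HasDerivAt g (g' θ) θ := by
    intro θ
    simpa [hgdef, hg'def] using
      (((Real.hasDerivAt_cos θ).const_mul 2).add_const sh).div_const K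
  have hgcont : Continuous g := by
    rw [hgdef]; fun_prop
  -- image of [0, π] under g
  have himg : g '' Set.Icc 0 π = Set.Icc a b := by
    ext y
    constructor
    · rintro ⟨θ, hθ, rfl⟩
      have h1 := Real.neg_one_le_cos θ
      have h2 := Real.cos_le_one θ
      constructor
      · rw [hadef, hgdef]
        simp only
        rw [div_le_div_iff₀ hK hK]; nlinarith
      · rw [hbdef, hgdef]
        simp only
        rw [div_le_div_iff₀ hK hK]; nlinarith
    · intro hy
      have hmem : (K * y - sh) / 2 ∈ Set.Icc (-1:ℝ) 1 := by
        obtain ⟨hy1, hy2⟩ := hy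
        rw [hadef, div_le_iff₀ hK] at hy1
        rw [hbdef, le_div_iff₀ hK] at hy2
        constructor
        · rw [le_div_iff₀ (by norm_num : (0:ℝ)<2)]; linarith
        · rw [div_le_iff₀ (by norm_num : (0:ℝ)<2)]; linarith
      obtain ⟨θ, hθ, hcosθ⟩ := Real.surjOn_cos hmem
      refine ⟨θ, hθ, ?_⟩
      rw [hgdef]
      simp only
      rw [hcosθ]
      field_simp
      ring
  have hmapsTo : Set.MapsTo g (Set.Icc 0 π) (Set.Icc a b) := by
    rw [← himg]; exact Set.mapsTo_image g _
  have hmapsTo2 : Set.MapsTo g (Set.Icc (0:ℝ) π) (Set.Icc (0:ℝ) 2) :=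
    fun θ hθ => hsub (hmapsTo hθ)
  have hgIoo : ∀ θ ∈ Set.Ioo (0:ℝ) π, g θ ∈ Set.Ioo (0:ℝ) 2 := by
    intro θ hθ
    have hc1 : Real.cos θ < 1 := by
      have := Real.strictAntiOn_cos (Set.left_mem_Icc.mpr hπ0)
        ⟨hθ.1.le, hθ.2.le⟩ hθ.1
      simpa using this
    have hc2 : -1 < Real.cos θ := by
      have := Real.strictAntiOn_cos ⟨hθ.1.le, hθ.2.le⟩
        (Set.right_mem_Icc.mpr hπ0) hθ.2
      simpa using this
    have hlow : a < g θ := by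
      rw [hadef, hgdef]
      simp only
      rw [div_lt_div_iff₀ hK hK]; nlinarith
    have hhigh : g θ < b := by
      rw [hbdef, hgdef]
      simp only
      rw [div_lt_div_iff₀ hK hK]; nlinarith
    exact ⟨lt_of_le_of_lt ha0 hlow, lt_of_lt_of_le hhigh hb2⟩
  have hinj : Set.InjOn g (Set.Icc 0 π) := by
    intro x hx y hy hxy
    apply Real.injOn_cos hx hy
    have h : (2 * Real.cos x + sh) / K = (2 * Real.cos y + sh) / K := hxy
    field_simp [hK.ne'] at h
    linarith
  -- the constant
  set C : ℝ := 2 ^ ((k : ℝ) / 2) * 2 / (K * Real.sqrt (2 * π)) with hCdef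
  have hsqrt2π : (0:ℝ) < Real.sqrt (2 * π) := Real.sqrt_pos.mpr (by positivity)
  have hC : 0 < C := by rw [hCdef]; positivity
  set F : ℝ → ℝ := fun θ => Y (g θ) with hFdef
  -- change of variables
  have hcov : Λ m = ∫ θ in Set.Icc (0:ℝ) π,
      |g' θ| • ((fun ζ => Y ζ * 2 ^ ((k : ℝ) / 2) * (1 / Real.sqrt (2 * π)) *
        VL m (K * ζ - sh) * (1 / Real.sqrt (4 - (K * ζ - sh) ^ 2))) (g θ)) := by
    rw [hΛ m, intervalIntegral.integral_of_le hab, ← MeasureTheory.integral_Icc_eq_integral_Ioc,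
      ← himg]
    exact MeasureTheory.integral_image_eq_integral_abs_deriv_smul measurableSet_Icc
      (fun θ _ => (hg θ).hasDerivWithinAt) hinj _
  -- rewrite the integrand a.e.
  have hae : (∫ θ in Set.Icc (0:ℝ) π,
      |g' θ| • ((fun ζ => Y ζ * 2 ^ ((k : ℝ) / 2) * (1 / Real.sqrt (2 * π)) *
        VL m (K * ζ - sh) * (1 / Real.sqrt (4 - (K * ζ - sh) ^ 2))) (g θ)))
      = ∫ θ in Set.Icc (0:ℝ) π, C * (F θ * Real.cos (m * θ)) := by
    apply MeasureTheory.setIntegral_congr_ae measurableSet_Icc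
    have hnull : MeasureTheory.volume ({0, π} : Set ℝ) = 0 :=
      ((Set.finite_singleton π).insert 0).measure_zero _
    rw [MeasureTheory.ae_iff]
    apply MeasureTheory.measure_mono_null _ hnull
    intro θ hθ
    simp only [Set.mem_setOf_eq, Classical.not_imp] at hθ
    obtain ⟨hθmem, hθne⟩ := hθ
    by_contra hcon
    simp only [Set.mem_insert_iff, Set.mem_singleton_iff, not_or] at hcon
    apply hθne
    have hθoo : θ ∈ Set.Ioo (0:ℝ) π :=
      ⟨lt_of_le_of_ne hθmem.1 (Ne.symm hcon.1), lt_of_le_of_ne hθmem.2 hcon.2⟩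
    have hsin : 0 < Real.sin θ := Real.sin_pos_of_pos_of_lt_pi hθoo.1 hθoo.2
    have harg : K * g θ - sh = 2 * Real.cos θ := by
      rw [hgdef]; field_simp; ring
    have hVL : VL m (K * g θ - sh) = 2 * Real.cos (m * θ) := by
      rw [harg, VL_two_cos]
    have hsqrt : Real.sqrt (4 - (K * g θ - sh) ^ 2) = 2 * Real.sin θ := by
      rw [harg]
      have h4 : 4 - (2 * Real.cos θ) ^ 2 = (2 * Real.sin θ) ^ 2 := by
        have := Real.sin_sq_add_cos_sq θ
        nlinarith
      rw [h4, Real.sqrt_sq (by positivity)]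
    have habs : |g' θ| = 2 * Real.sin θ / K := by
      rw [hg'def]
      simp only
      rw [abs_div, abs_of_pos hK, abs_mul,
        abs_of_pos (by norm_num : (0:ℝ) < 2), abs_neg, abs_of_pos hsin]
    simp only [smul_eq_mul]
    rw [hVL, hsqrt, habs, hCdef, hFdef]
    field_simp
  -- interval integral form
  have hIcc : (∫ θ in Set.Icc (0:ℝ) π, C * (F θ * Real.cos (m * θ)))
      = C * ∫ θ in (0:ℝ)..π, F θ * Real.cos (m * θ) := by
    rw [MeasureTheory.integral_Icc_eq_integral_Ioc, ← intervalIntegral.integral_of_le hπ0,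
      intervalIntegral.integral_const_mul]
  -- derivatives of Y
  have hUD : UniqueDiffOn ℝ (Set.Icc (0:ℝ) 2) := uniqueDiffOn_Icc (by norm_num)
  set φ : ℝ → ℝ := derivWithin Y (Set.Icc 0 2) with hφdef
  set ψ : ℝ → ℝ := derivWithin φ (Set.Icc 0 2) with hψdef
  have hφ1 : ContDiffOn ℝ 1 φ (Set.Icc 0 2) :=
    hY.derivWithin hUD (by norm_num)
  have hφc : ContinuousOn φ (Set.Icc 0 2) := hφ1.continuousOn
  have hψc : ContinuousOn ψ (Set.Icc 0 2) :=
    (hφ1.derivWithin (m := 0) hUD (by norm_num)).continuousOn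
  have hYat : ∀ x ∈ Set.Ioo (0:ℝ) 2, HasDerivAt Y (φ x) x := by
    intro x hx
    have hnx : Set.Icc (0:ℝ) 2 ∈ nhds x := Icc_mem_nhds hx.1 hx.2
    have hd : DifferentiableWithinAt ℝ Y (Set.Icc (0:ℝ) 2) x :=
      (hY.differentiableOn (by norm_num)) x (Set.Ioo_subset_Icc_self hx)
    have hd2 := hd.differentiableAt hnx
    rw [hφdef, derivWithin_of_mem_nhds hnx]
    exact hd2.hasDerivAt
  have hφat : ∀ x ∈ Set.Ioo (0:ℝ) 2, HasDerivAt φ (ψ x) x := by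
    intro x hx
    have hnx : Set.Icc (0:ℝ) 2 ∈ nhds x := Icc_mem_nhds hx.1 hx.2
    have hd : DifferentiableWithinAt ℝ φ (Set.Icc (0:ℝ) 2) x :=
      (hφ1.differentiableOn one_ne_zero) x (Set.Ioo_subset_Icc_self hx)
    have hd2 := hd.differentiableAt hnx
    rw [hψdef, derivWithin_of_mem_nhds hnx]
    exact hd2.hasDerivAt
  -- second derivative is ψ
  have hψeq : ∀ x ∈ Set.Icc (0:ℝ) 2, iteratedDerivWithin 2 Y (Set.Icc (0:ℝ) 2) x = ψ x := by
    intro x hx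
    rw [hψdef, hφdef, iteratedDerivWithin_succ]
    apply derivWithin_congr
    · intro y hy
      rw [iteratedDerivWithin_one]
    · rw [iteratedDerivWithin_one]
  have hψbd : ∀ x ∈ Set.Icc (0:ℝ) 2, |ψ x| ≤ H := by
    intro x hx
    rw [← hψeq x hx]
    exact hY'' x hx
  -- compositions
  set G : ℝ → ℝ := fun θ => φ (g θ) with hGdef
  set G2 : ℝ → ℝ := fun θ => ψ (g θ) with hG2def
  have hFc : ContinuousOn F (Set.Icc 0 π) :=
    hY.continuousOn.comp hgcont.continuousOn hmapsTo2
  have hGc : ContinuousOn G (Set.Icc 0 π) :=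
    hφc.comp hgcont.continuousOn hmapsTo2
  have hG2c : ContinuousOn G2 (Set.Icc 0 π) :=
    hψc.comp hgcont.continuousOn hmapsTo2
  have hg'cont : Continuous g' := by rw [hg'def]; fun_prop
  have hFd : ∀ θ ∈ Set.Ioo (0:ℝ) π, HasDerivAt F (G θ * g' θ) θ :=
    fun θ hθ => (hYat _ (hgIoo θ hθ)).comp θ (hg θ)
  have hGd : ∀ θ ∈ Set.Ioo (0:ℝ) π, HasDerivAt G (G2 θ * g' θ) θ :=
    fun θ hθ => (hφat _ (hgIoo θ hθ)).comp θ (hg θ)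
  have hF'c : ContinuousOn (fun θ => G θ * g' θ) (Set.Icc 0 π) :=
    hGc.mul hg'cont.continuousOn
  have hG'c : ContinuousOn (fun θ => G2 θ * g' θ) (Set.Icc 0 π) :=
    hG2c.mul hg'cont.continuousOn
  -- bound on J n
  have hJ : ∀ n : ℕ, 1 ≤ n →
      |∫ θ in (0:ℝ)..π, G θ * Real.cos (n * θ)| ≤ 4 * H / (n * K) := by
    intro n hn
    rw [ibp_cos G (fun θ => G2 θ * g' θ) n hn hGc hG'c hGd]
    rw [abs_mul, abs_neg, abs_of_nonneg (by positivity : (0:ℝ) ≤ 1/(n:ℝ))]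
    have hb1 : |∫ θ in (0:ℝ)..π, G2 θ * g' θ * Real.sin (n * θ)| ≤ 4 * H / K := by
      have hptwise : ∀ θ ∈ Set.Icc (0:ℝ) π,
          |G2 θ * g' θ * Real.sin (n * θ)| ≤ H * (2 * Real.sin θ / K) := by
        intro θ hθ
        have hsin : 0 ≤ Real.sin θ := Real.sin_nonneg_of_nonneg_of_le_pi hθ.1 hθ.2
        have h1 : |G2 θ| ≤ H := hψbd _ (hmapsTo2 hθ)
        have h2 : |g' θ| = 2 * Real.sin θ / K := by
          rw [hg'def]
          simp only
          rw [abs_div, abs_of_pos hK, abs_mul,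
            abs_of_pos (by norm_num : (0:ℝ) < 2), abs_neg, abs_of_nonneg hsin]
        have h3 : |Real.sin (n * θ)| ≤ 1 := abs_le.mpr ⟨Real.neg_one_le_sin _, Real.sin_le_one _⟩
        calc |G2 θ * g' θ * Real.sin (n * θ)| = |G2 θ| * |g' θ| * |Real.sin (n * θ)| := by
              rw [abs_mul, abs_mul]
          _ ≤ H * |g' θ| * 1 :=
              mul_le_mul (mul_le_mul_of_nonneg_right h1 (abs_nonneg _)) h3 (abs_nonneg _)
                (mul_nonneg (le_trans (abs_nonneg _) h1) (abs_nonneg _))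
          _ = H * (2 * Real.sin θ / K) := by rw [h2, mul_one]
      calc |∫ θ in (0:ℝ)..π, G2 θ * g' θ * Real.sin (n * θ)|
          ≤ ∫ θ in (0:ℝ)..π, |G2 θ * g' θ * Real.sin (n * θ)| :=
            intervalIntegral.abs_integral_le_integral_abs hπ0
        _ ≤ ∫ θ in (0:ℝ)..π, H * (2 * Real.sin θ / K) := by
            apply intervalIntegral.integral_mono_on hπ0 _ _ hptwise
            · apply ContinuousOn.intervalIntegrable
              rw [Set.uIcc_of_le hπ0]
              exact ((hG2c.mul hg'cont.continuousOn).mul (by fun_prop)).abs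
            · apply ContinuousOn.intervalIntegrable
              rw [Set.uIcc_of_le hπ0]
              fun_prop
        _ = 4 * H / K := by
            have : (fun θ => H * (2 * Real.sin θ / K)) = fun θ => (2 * H / K) * Real.sin θ := by
              ext θ; ring
            rw [this, intervalIntegral.integral_const_mul, integral_sin]
            simp
            ring
    calc 1/(n:ℝ) * |∫ θ in (0:ℝ)..π, G2 θ * g' θ * Real.sin (n * θ)|
        ≤ 1/(n:ℝ) * (4 * H / K) := mul_le_mul_of_nonneg_left hb1 (by positivity)
      _ = 4 * H / (n * K) := by
          have hn0 : (n:ℝ) ≠ 0 := by positivity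
          field_simp
  -- main estimate
  have hm1 : (1:ℕ) ≤ m := by omega
  have hcast1 : ((m-1:ℕ):ℝ) = (m:ℝ) - 1 := by
    simpa using Nat.cast_sub (R := ℝ) hm1
  have hI1 := ibp_cos F (fun θ => G θ * g' θ) m hm1 hFc hF'c hFd
  have hsplit : (∫ θ in (0:ℝ)..π, (G θ * g' θ) * Real.sin (m * θ))
      = -(1/K) * ((∫ θ in (0:ℝ)..π, G θ * Real.cos (((m-1:ℕ):ℝ) * θ))
          - ∫ θ in (0:ℝ)..π, G θ * Real.cos (((m+1:ℕ):ℝ) * θ)) := by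
    have heq : ∀ θ : ℝ, (G θ * g' θ) * Real.sin (m * θ)
        = (-(1/K)) * (G θ * Real.cos (((m-1:ℕ):ℝ) * θ))
          - (-(1/K)) * (G θ * Real.cos (((m+1:ℕ):ℝ) * θ)) := by
      intro θ
      rw [hcast1, show g' θ = 2 * -Real.sin θ / K from rfl]
      push_cast
      rw [show ((m:ℝ) - 1) * θ = (m:ℝ) * θ - θ by ring,
        show ((m:ℝ) + 1) * θ = (m:ℝ) * θ + θ by ring,
        Real.cos_sub, Real.cos_add]
      field_simp
      ring
    rw [intervalIntegral.integral_congr (fun θ _ => heq θ)]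
    have hc1 : ContinuousOn (fun θ : ℝ => Real.cos (((m-1:ℕ):ℝ) * θ)) (Set.Icc 0 π) := by
      fun_prop
    have hc2 : ContinuousOn (fun θ : ℝ => Real.cos (((m+1:ℕ):ℝ) * θ)) (Set.Icc 0 π) := by
      fun_prop
    have hint1 : IntervalIntegrable (fun θ => (-(1/K)) * (G θ * Real.cos (((m-1:ℕ):ℝ) * θ)))
        MeasureTheory.volume 0 π := by
      apply ContinuousOn.intervalIntegrable
      rw [Set.uIcc_of_le hπ0]
      exact continuousOn_const.mul (hGc.mul hc1)
    have hint2 : IntervalIntegrable (fun θ => (-(1/K)) * (G θ * Real.cos (((m+1:ℕ):ℝ) * θ)))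
        MeasureTheory.volume 0 π := by
      apply ContinuousOn.intervalIntegrable
      rw [Set.uIcc_of_le hπ0]
      exact continuousOn_const.mul (hGc.mul hc2)
    rw [intervalIntegral.integral_sub hint1 hint2,
      intervalIntegral.integral_const_mul, intervalIntegral.integral_const_mul]
    ring
  have hI1bound : |∫ θ in (0:ℝ)..π, F θ * Real.cos (m * θ)|
      ≤ 8 * H / (K^2 * ((m:ℝ)^2 - 1)) := by
    rw [hI1, hsplit]
    have hJa := hJ (m-1) (by omega)
    have hJb := hJ (m+1) (by omega)
    rw [hcast1] at hJa
    have hcast2 : ((m+1:ℕ):ℝ) = (m:ℝ) + 1 := by push_cast; ring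
    rw [hcast2] at hJb
    set Ja := ∫ θ in (0:ℝ)..π, G θ * Real.cos (((m-1:ℕ):ℝ) * θ) with hJadef
    set Jb := ∫ θ in (0:ℝ)..π, G θ * Real.cos (((m+1:ℕ):ℝ) * θ) with hJbdef
    rw [hcast1] at hJadef
    rw [hcast2] at hJbdef
    have hJa' : |Ja| ≤ 4 * H / (((m:ℝ) - 1) * K) := by rw [hJadef, ← hcast1]; rw [hcast1]; exact hJa
    have hJb' : |Jb| ≤ 4 * H / (((m:ℝ) + 1) * K) := by rw [hJbdef, ← hcast2]; rw [hcast2]; exact hJb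
    have h5 : |Ja - Jb| ≤ 4 * H / (((m:ℝ) - 1) * K) + 4 * H / (((m:ℝ) + 1) * K) := by
      calc |Ja - Jb| ≤ |Ja| + |Jb| := abs_sub _ _
        _ ≤ _ := add_le_add hJa' hJb'
    have habs0 : |(-(1/(m:ℝ))) * (-(1/K) * (Ja - Jb))| = (1/(m:ℝ)) * ((1/K) * |Ja - Jb|) := by
      rw [abs_mul, abs_mul, abs_neg, abs_neg,
        abs_of_nonneg (by positivity : (0:ℝ) ≤ 1/(m:ℝ)),
        abs_of_nonneg (by positivity : (0:ℝ) ≤ 1/K)]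
    rw [habs0]
    have hM1 : (0:ℝ) < (m:ℝ) - 1 := by linarith
    have hM2 : (0:ℝ) < (m:ℝ) + 1 := by linarith
    have hM0 : (0:ℝ) < (m:ℝ) := by linarith
    calc (1/(m:ℝ)) * ((1/K) * |Ja - Jb|)
        ≤ (1/(m:ℝ)) * ((1/K) * (4 * H / (((m:ℝ) - 1) * K) + 4 * H / (((m:ℝ) + 1) * K))) := by
          apply mul_le_mul_of_nonneg_left _ (by positivity)
          exact mul_le_mul_of_nonneg_left h5 (by positivity)
      _ = 8 * H / (K^2 * ((m:ℝ)^2 - 1)) := by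
          have hne : ((m:ℝ)^2 - 1) ≠ 0 := by nlinarith
          field_simp [hne, hK.ne', hM1.ne', hM2.ne', hM0.ne']
          ring
  -- final numeric comparison
  have hM2pos : (0:ℝ) < (m:ℝ)^2 - 1 := by nlinarith
  have hsqrtπ : (0:ℝ) < Real.sqrt π := Real.sqrt_pos.mpr Real.pi_pos
  have hkey : C * 8 / K^2 ≤ Real.sqrt π * 2 ^ (((-5:ℝ) * (k:ℝ) + 5) / 2) := by
    have h2π : Real.sqrt (2 * π) = 2 ^ ((1:ℝ)/2) * Real.sqrt π := by
      rw [Real.sqrt_mul (by norm_num : (0:ℝ) ≤ 2) π, Real.sqrt_eq_rpow]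
    have hKr : K = (2:ℝ) ^ ((k:ℝ)) := by
      rw [hKdef, ← Real.rpow_natCast 2 k]
    rw [← mul_le_mul_iff_of_pos_right hsqrtπ]
    have hππ : Real.sqrt π * 2 ^ (((-5:ℝ) * (k:ℝ) + 5) / 2) * Real.sqrt π
        = π * 2 ^ (((-5:ℝ) * (k:ℝ) + 5) / 2) := by
      rw [mul_right_comm, Real.mul_self_sqrt Real.pi_pos.le]
    have hCs : C * 8 / K^2 * Real.sqrt π
        = (2:ℝ)^((k:ℝ)/2) * 16 / ((2:ℝ)^((k:ℝ)) * (2:ℝ)^((1:ℝ)/2) * (2:ℝ)^(2*(k:ℝ))) := by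
      have hsq : ((2:ℝ)^((k:ℝ)))^2 = (2:ℝ)^(2*(k:ℝ)) := by
        rw [← Real.rpow_natCast ((2:ℝ)^((k:ℝ))) 2, ← Real.rpow_mul (by norm_num : (0:ℝ) ≤ 2)]
        norm_num [mul_comm]
      rw [hCdef, h2π, hKr, ← hsq]
      have hA : (0:ℝ) < (2:ℝ)^((k:ℝ)) := by positivity
      have hB : (0:ℝ) < (2:ℝ)^((1:ℝ)/2) := by positivity
      field_simp
      ring
    rw [hCs, hππ]
    have hpoweq : (2:ℝ)^((k:ℝ)/2) * 16 / ((2:ℝ)^((k:ℝ)) * (2:ℝ)^((1:ℝ)/2) * (2:ℝ)^(2*(k:ℝ)))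
        = 2 * (2:ℝ) ^ (((-5:ℝ) * (k:ℝ) + 5) / 2) := by
      apply two_rpow_div_helper
      ring
    rw [hpoweq]
    exact mul_le_mul_of_nonneg_right Real.two_le_pi (Real.rpow_nonneg (by norm_num) _)
  calc |Λ m| = C * |∫ θ in (0:ℝ)..π, F θ * Real.cos (m * θ)| := by
        rw [hcov, hae, hIcc, abs_mul, abs_of_pos hC]
    _ ≤ C * (8 * H / (K^2 * ((m:ℝ)^2 - 1))) := mul_le_mul_of_nonneg_left hI1bound hC.le
    _ = (C * 8 / K^2) * (H / ((m:ℝ)^2 - 1)) := by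
        field_simp
    _ ≤ (Real.sqrt π * 2 ^ (((-5:ℝ) * (k:ℝ) + 5) / 2)) * (H / ((m:ℝ)^2 - 1)) :=
        mul_le_mul_of_nonneg_right hkey (div_nonneg hH hM2pos.le)
    _ = H * Real.sqrt π * 2 ^ (((-5:ℝ) * (k:ℝ) + 5) / 2) / ((m:ℝ)^2 - 1) := by
        ring
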